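/- For all real angles θ, φ and every integer p with |p| ≤ 2, the squared norm of the rank-2 vector spherical harmonic satisfies the paper's angular-power-distribution formula: ‖Y⁽⁺¹⁾₂,ₚ(θ,φ)‖² = (1/12) [ (2+p)(3−p) |Y₂,ₚ₋₁(θ,φ)|² + 2p² |Y₂,ₚ(θ,φ)|² + (2−p)(3+p) |Y₂,ₚ₊₁(θ,φ)|² ], with the convention Y₂,ₘ := 0 for |m| > 2. -/

import Mathlib

noncomputable section

open Real Complex

/-- Propagation direction unit vector. -/
def khat (θ φ : ℝ) : Fin 3 → ℂ :=
  ![((Real.sin θ * Real.cos φ : ℝ) : ℂ), ((Real.sin θ * Real.sin φ : ℝ) : ℂ),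
    ((Real.cos θ : ℝ) : ℂ)]

/-- Polar unit vector θ̂. -/
def thetahat (θ φ : ℝ) : Fin 3 → ℂ :=
  ![((Real.cos θ * Real.cos φ : ℝ) : ℂ), ((Real.cos θ * Real.sin φ : ℝ) : ℂ),
    ((-Real.sin θ : ℝ) : ℂ)]

/-- Azimuthal unit vector φ̂. -/
def phihat (θ φ : ℝ) : Fin 3 → ℂ :=
  ![((-Real.sin φ : ℝ) : ℂ), ((Real.cos φ : ℝ) : ℂ), 0]

/-- Unconjugated bilinear dot product on ℂ³. -/
def dotc (A B : Fin 3 → ℂ) : ℂ := ∑ i, A i * B i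

/-- Spherical components of a vector in ℂ³. -/
def sph (A : Fin 3 → ℂ) (q : ℤ) : ℂ :=
  if q = 1 then -(A 0 + Complex.I * A 1) / (Real.sqrt 2 : ℂ)
  else if q = 0 then A 2
  else if q = -1 then (A 0 - Complex.I * A 1) / (Real.sqrt 2 : ℂ)
  else 0

/-- Rank-1 type-(+1) vector spherical harmonics. -/
def Y1v (p : ℤ) (θ φ : ℝ) : Fin 3 → ℂ :=
  if p = 0 then fun i =>
    -((Real.sqrt (3 / (8 * Real.pi)) : ℝ) : ℂ) * ((Real.sin θ : ℝ) : ℂ) * thetahat θ φ i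
  else if p = 1 then fun i =>
    -Complex.exp (Complex.I * (φ : ℂ)) * ((Real.sqrt (3 / (16 * Real.pi)) : ℝ) : ℂ) *
      (((Real.cos θ : ℝ) : ℂ) * thetahat θ φ i + Complex.I * phihat θ φ i)
  else if p = -1 then fun i =>
    Complex.exp (-Complex.I * (φ : ℂ)) * ((Real.sqrt (3 / (16 * Real.pi)) : ℝ) : ℂ) *
      (((Real.cos θ : ℝ) : ℂ) * thetahat θ φ i - Complex.I * phihat θ φ i)
  else 0

/-- Rank-2 type-(+1) vector spherical harmonics. -/
def Y2v (p : ℤ) (θ φ : ℝ) : Fin 3 → ℂ :=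
  if p = 0 then fun i =>
    -((Real.sqrt (15 / (32 * Real.pi)) : ℝ) : ℂ) * ((Real.sin (2 * θ) : ℝ) : ℂ) * thetahat θ φ i
  else if p = 1 then fun i =>
    -Complex.exp (Complex.I * (φ : ℂ)) * ((Real.sqrt (5 / (16 * Real.pi)) : ℝ) : ℂ) *
      (((Real.cos (2 * θ) : ℝ) : ℂ) * thetahat θ φ i
        + Complex.I * ((Real.cos θ : ℝ) : ℂ) * phihat θ φ i)
  else if p = -1 then fun i =>
    Complex.exp (-Complex.I * (φ : ℂ)) * ((Real.sqrt (5 / (16 * Real.pi)) : ℝ) : ℂ) *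
      (((Real.cos (2 * θ) : ℝ) : ℂ) * thetahat θ φ i
        - Complex.I * ((Real.cos θ : ℝ) : ℂ) * phihat θ φ i)
  else if p = 2 then fun i =>
    Complex.exp (2 * Complex.I * (φ : ℂ)) * ((Real.sqrt (5 / (16 * Real.pi)) : ℝ) : ℂ) *
      ((Real.sin θ : ℝ) : ℂ) *
      (((Real.cos θ : ℝ) : ℂ) * thetahat θ φ i + Complex.I * phihat θ φ i)
  else if p = -2 then fun i =>
    Complex.exp (-(2 * Complex.I) * (φ : ℂ)) * ((Real.sqrt (5 / (16 * Real.pi)) : ℝ) : ℂ) *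
      ((Real.sin θ : ℝ) : ℂ) *
      (((Real.cos θ : ℝ) : ℂ) * thetahat θ φ i - Complex.I * phihat θ φ i)
  else 0

/-- Degree-1 scalar spherical harmonics. -/
def Y1s (m : ℤ) (θ φ : ℝ) : ℂ :=
  if m = 0 then ((Real.sqrt (3 / (4 * Real.pi)) * Real.cos θ : ℝ) : ℂ)
  else if m = 1 then
    -((Real.sqrt (3 / (8 * Real.pi)) * Real.sin θ : ℝ) : ℂ) * Complex.exp (Complex.I * (φ : ℂ))
  else if m = -1 then
    ((Real.sqrt (3 / (8 * Real.pi)) * Real.sin θ : ℝ) : ℂ) * Complex.exp (-Complex.I * (φ : ℂ))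
  else 0

/-- Degree-2 scalar spherical harmonics. -/
def Y2s (m : ℤ) (θ φ : ℝ) : ℂ :=
  if m = 0 then ((Real.sqrt (5 / (16 * Real.pi)) * (3 * Real.cos θ ^ 2 - 1) : ℝ) : ℂ)
  else if m = 1 then
    -((Real.sqrt (15 / (8 * Real.pi)) * (Real.sin θ * Real.cos θ) : ℝ) : ℂ) *
      Complex.exp (Complex.I * (φ : ℂ))
  else if m = -1 then
    ((Real.sqrt (15 / (8 * Real.pi)) * (Real.sin θ * Real.cos θ) : ℝ) : ℂ) *
      Complex.exp (-Complex.I * (φ : ℂ))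
  else if m = 2 then
    ((Real.sqrt (15 / (32 * Real.pi)) * Real.sin θ ^ 2 : ℝ) : ℂ) *
      Complex.exp (2 * Complex.I * (φ : ℂ))
  else if m = -2 then
    ((Real.sqrt (15 / (32 * Real.pi)) * Real.sin θ ^ 2 : ℝ) : ℂ) *
      Complex.exp (-(2 * Complex.I) * (φ : ℂ))
  else 0

/-- Rank-2 irreducible tensor product of two rank-1 systems of components. -/
def T2 (A B : ℤ → ℂ) (p : ℤ) : ℂ :=
  if p = 2 then A 1 * B 1
  else if p = 1 then (A 1 * B 0 + A 0 * B 1) / (Real.sqrt 2 : ℂ)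
  else if p = 0 then (A 1 * B (-1) + 2 * A 0 * B 0 + A (-1) * B 1) / (Real.sqrt 6 : ℂ)
  else if p = -1 then (A (-1) * B 0 + A 0 * B (-1)) / (Real.sqrt 2 : ℂ)
  else if p = -2 then A (-1) * B (-1)
  else 0



lemma key_vsh (z : ℂ) (a b θ φ : ℝ) :
    ∑ i, ‖z * ((a:ℂ) * thetahat θ φ i + Complex.I * (b:ℂ) * phihat θ φ i)‖^2
      = ‖z‖^2 * (a^2 + b^2) := by
  have hsθ : Real.sin θ ^ 2 + Real.cos θ ^ 2 = 1 := Real.sin_sq_add_cos_sq θ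
  have hsφ : Real.sin φ ^ 2 + Real.cos φ ^ 2 = 1 := Real.sin_sq_add_cos_sq φ
  simp only [thetahat, phihat, Fin.sum_univ_three, Matrix.cons_val_zero, Matrix.cons_val_one,
    Matrix.head_cons, Matrix.cons_val_two, Matrix.tail_cons, norm_mul, mul_pow,
    Complex.sq_norm, Complex.normSq_apply, Complex.add_re, Complex.add_im,
    Complex.mul_re, Complex.mul_im, Complex.I_re, Complex.I_im, Complex.ofReal_re,
    Complex.ofReal_im, Complex.zero_re, Complex.zero_im, mul_zero, zero_mul, add_zero,
    sub_zero, zero_add]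
  linear_combination ((z.re^2+z.im^2)*(a^2*Real.cos θ^2 + b^2)) * hsφ
    + ((z.re^2+z.im^2)*a^2) * hsθ

lemma nexp2 (w : ℂ) (hw : w.re = 0) (r : ℝ) : ‖Complex.exp w * (r:ℂ)‖^2 = r^2 := by
  rw [norm_mul, Complex.norm_exp, hw,
    Real.exp_zero, one_mul, Complex.norm_real, Real.norm_eq_abs, _root_.sq_abs]

lemma nexp3 (w : ℂ) (hw : w.re = 0) (r t : ℝ) :
    ‖Complex.exp w * (r:ℂ) * (t:ℂ)‖^2 = r^2 * t^2 := by
  rw [norm_mul, norm_mul, Complex.norm_exp, hw,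
    Real.exp_zero, one_mul, Complex.norm_real, Complex.norm_real, Real.norm_eq_abs,
    Real.norm_eq_abs, mul_pow, _root_.sq_abs, _root_.sq_abs]

lemma nexp2' (w : ℂ) (hw : w.re = 0) (r : ℝ) : ‖(r:ℂ) * Complex.exp w‖^2 = r^2 := by
  rw [mul_comm]; exact nexp2 w hw r

lemma re_I_mul (φ : ℝ) : (Complex.I * (φ:ℂ)).re = 0 := by simp
lemma re_neg_I_mul (φ : ℝ) : (-Complex.I * (φ:ℂ)).re = 0 := by simp
lemma re_two_I_mul (φ : ℝ) : (2 * Complex.I * (φ:ℂ)).re = 0 := by simp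
lemma re_neg_two_I_mul (φ : ℝ) : (-(2 * Complex.I) * (φ:ℂ)).re = 0 := by simp

lemma nY2s0 (θ φ : ℝ) : ‖Y2s 0 θ φ‖^2
    = Real.sqrt (5 / (16 * Real.pi))^2 * (3 * Real.cos θ ^ 2 - 1)^2 := by
  rw [Y2s, if_pos rfl, Complex.norm_real, Real.norm_eq_abs, _root_.sq_abs, mul_pow]

lemma nY2s1 (θ φ : ℝ) : ‖Y2s 1 θ φ‖^2
    = Real.sqrt (15 / (8 * Real.pi))^2 * (Real.sin θ * Real.cos θ)^2 := by
  rw [Y2s, if_neg (by decide), if_pos rfl, neg_mul, norm_neg, nexp2' _ (re_I_mul φ), mul_pow]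

lemma nY2sm1 (θ φ : ℝ) : ‖Y2s (-1) θ φ‖^2
    = Real.sqrt (15 / (8 * Real.pi))^2 * (Real.sin θ * Real.cos θ)^2 := by
  rw [Y2s, if_neg (by decide), if_neg (by decide), if_pos rfl,
    nexp2' _ (re_neg_I_mul φ), mul_pow]

lemma nY2s2 (θ φ : ℝ) : ‖Y2s 2 θ φ‖^2
    = Real.sqrt (15 / (32 * Real.pi))^2 * (Real.sin θ ^ 2)^2 := by
  rw [Y2s, if_neg (by decide), if_neg (by decide), if_neg (by decide), if_pos rfl,
    nexp2' _ (re_two_I_mul φ), mul_pow]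

lemma nY2sm2 (θ φ : ℝ) : ‖Y2s (-2) θ φ‖^2
    = Real.sqrt (15 / (32 * Real.pi))^2 * (Real.sin θ ^ 2)^2 := by
  rw [Y2s, if_neg (by decide), if_neg (by decide), if_neg (by decide), if_neg (by decide),
    if_pos rfl, nexp2' _ (re_neg_two_I_mul φ), mul_pow]

lemma nY2s3 (θ φ : ℝ) : ‖Y2s 3 θ φ‖^2 = 0 := by
  rw [Y2s, if_neg (by decide), if_neg (by decide), if_neg (by decide), if_neg (by decide),
    if_neg (by decide)]
  simp

lemma nY2sm3 (θ φ : ℝ) : ‖Y2s (-3) θ φ‖^2 = 0 := by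
  rw [Y2s, if_neg (by decide), if_neg (by decide), if_neg (by decide), if_neg (by decide),
    if_neg (by decide)]
  simp

/-- the paper's angular-power-distribution formula for K = 2:
‖Y⁽⁺¹⁾₂,ₚ‖² = (1/12)[(2+p)(3−p)|Y₂,ₚ₋₁|² + 2p²|Y₂,ₚ|² + (2−p)(3+p)|Y₂,ₚ₊₁|²]. -/
theorem vsh_power_distribution (θ φ : ℝ) (p : ℤ) (hp : |p| ≤ 2) :
    (∑ i, ‖Y2v p θ φ i‖ ^ 2)
      = (1 / 12) * ((((2 + p) * (3 - p) : ℤ) : ℝ) * ‖Y2s (p - 1) θ φ‖ ^ 2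
          + (((2 * p ^ 2 : ℤ)) : ℝ) * ‖Y2s p θ φ‖ ^ 2
          + (((2 - p) * (3 + p) : ℤ) : ℝ) * ‖Y2s (p + 1) θ φ‖ ^ 2) := by
  have hπ : (0:ℝ) < Real.pi := Real.pi_pos
  have hsθ : Real.sin θ ^ 2 + Real.cos θ ^ 2 = 1 := Real.sin_sq_add_cos_sq θ
  have e1 : Real.sqrt (5 / (16 * Real.pi)) ^ 2 = 5 / (16*Real.pi) := Real.sq_sqrt (by positivity)
  have e2 : Real.sqrt (15 / (8 * Real.pi)) ^ 2 = 15 / (8*Real.pi) := Real.sq_sqrt (by positivity)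
  have e3 : Real.sqrt (15 / (32 * Real.pi)) ^ 2 = 15 / (32*Real.pi) := Real.sq_sqrt (by positivity)
  obtain ⟨hl, hr⟩ := abs_le.mp hp
  interval_cases p
  · -- p = -2
    have hY : ∀ i, Y2v (-2) θ φ i
        = (Complex.exp (-(2 * Complex.I) * (φ:ℂ)) * ((Real.sqrt (5 / (16 * Real.pi)) : ℝ) : ℂ)
            * ((Real.sin θ : ℝ):ℂ)) *
          (((Real.cos θ : ℝ):ℂ) * thetahat θ φ i + Complex.I * (((-1 : ℝ)):ℂ) * phihat θ φ i) := by
      intro i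
      rw [Y2v, if_neg (by decide), if_neg (by decide), if_neg (by decide), if_neg (by decide),
        if_pos rfl]
      beta_reduce
      try simp only [Complex.ofReal_neg, Complex.ofReal_one, Complex.ofReal_zero]
      try ring
    have hL : (∑ i, ‖Y2v (-2) θ φ i‖ ^ 2)
        = (Real.sqrt (5 / (16 * Real.pi)))^2 * Real.sin θ^2 * (Real.cos θ^2 + (1:ℝ)^2) := by
      simp_rw [hY]
      rw [key_vsh, nexp3 _ (re_neg_two_I_mul φ), neg_pow]
      ring
    rw [show ((-2:ℤ) - 1) = -3 from rfl, show ((-2:ℤ) + 1) = -1 from rfl,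
      hL, nY2sm3 θ φ, nY2sm2 θ φ, nY2sm1 θ φ]
    push_cast only [Int.cast_mul, Int.cast_add, Int.cast_sub, Int.cast_ofNat, Int.cast_one,
      Int.cast_pow, Int.cast_two, Int.cast_neg]
    linear_combination (-(5/(16*Real.pi))*Real.sin θ^2) * hsθ + (Real.sin θ^2*(Real.cos θ^2+1)) * e1
      - ((Real.sin θ*Real.cos θ)^2/3) * e2 - (2*(Real.sin θ^2)^2/3) * e3
  · -- p = -1
    have hY : ∀ i, Y2v (-1) θ φ i
        = (Complex.exp (-Complex.I * (φ:ℂ)) * ((Real.sqrt (5 / (16 * Real.pi)) : ℝ) : ℂ)) *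
          (((Real.cos (2*θ) : ℝ):ℂ) * thetahat θ φ i
            + Complex.I * (((-Real.cos θ : ℝ)):ℂ) * phihat θ φ i) := by
      intro i
      rw [Y2v, if_neg (by decide), if_neg (by decide), if_pos rfl]
      beta_reduce
      try simp only [Complex.ofReal_neg, Complex.ofReal_one, Complex.ofReal_zero]
      try ring
    have hL : (∑ i, ‖Y2v (-1) θ φ i‖ ^ 2)
        = (Real.sqrt (5 / (16 * Real.pi)))^2 * (Real.cos (2*θ)^2 + (-Real.cos θ)^2) := by
      simp_rw [hY]
      rw [key_vsh, nexp2 _ (re_neg_I_mul φ)]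
    rw [show ((-1:ℤ) - 1) = -2 from rfl, show ((-1:ℤ) + 1) = 0 from rfl,
      hL, nY2sm2 θ φ, nY2sm1 θ φ, nY2s0 θ φ, Real.cos_two_mul]
    push_cast only [Int.cast_mul, Int.cast_add, Int.cast_sub, Int.cast_ofNat, Int.cast_one,
      Int.cast_pow, Int.cast_two, Int.cast_neg]
    linear_combination (-(5/(16*Real.pi))*(Real.sin θ^2+Real.cos θ^2+1)/2) * hsθ
      + ((2*Real.cos θ^2-1)^2 + Real.cos θ^2 - (3*Real.cos θ^2-1)^2/2) * e1 - ((Real.sin θ*Real.cos θ)^2/6) * e2 - ((Real.sin θ^2)^2/3) * e3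
  · -- p = 0
    have hY : ∀ i, Y2v 0 θ φ i
        = (-((Real.sqrt (15 / (32 * Real.pi)) : ℝ) : ℂ)) *
          (((Real.sin (2*θ) : ℝ):ℂ) * thetahat θ φ i
            + Complex.I * (((0 : ℝ)):ℂ) * phihat θ φ i) := by
      intro i
      rw [Y2v, if_pos rfl]
      beta_reduce
      try simp only [Complex.ofReal_neg, Complex.ofReal_one, Complex.ofReal_zero]
      try ring
    have hL : (∑ i, ‖Y2v 0 θ φ i‖ ^ 2)
        = (Real.sqrt (15 / (32 * Real.pi)))^2 * (Real.sin (2*θ)^2 + (0:ℝ)^2) := by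
      simp_rw [hY]
      rw [key_vsh, norm_neg, Complex.norm_real, Real.norm_eq_abs, _root_.sq_abs]
    rw [show ((0:ℤ) - 1) = -1 from rfl, show ((0:ℤ) + 1) = 1 from rfl,
      hL, nY2sm1 θ φ, nY2s0 θ φ, nY2s1 θ φ, Real.sin_two_mul]
    push_cast only [Int.cast_mul, Int.cast_add, Int.cast_sub, Int.cast_ofNat, Int.cast_one,
      Int.cast_pow, Int.cast_two, Int.cast_neg]
    linear_combination ((2*Real.sin θ*Real.cos θ)^2) * e3 - ((Real.sin θ*Real.cos θ)^2) * e2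
  · -- p = 1
    have hY : ∀ i, Y2v 1 θ φ i
        = (-(Complex.exp (Complex.I * (φ:ℂ)) * ((Real.sqrt (5 / (16 * Real.pi)) : ℝ) : ℂ))) *
          (((Real.cos (2*θ) : ℝ):ℂ) * thetahat θ φ i
            + Complex.I * ((Real.cos θ : ℝ):ℂ) * phihat θ φ i) := by
      intro i
      rw [Y2v, if_neg (by decide), if_pos rfl]
      beta_reduce
      try simp only [Complex.ofReal_neg, Complex.ofReal_one, Complex.ofReal_zero]
      try ring
    have hL : (∑ i, ‖Y2v 1 θ φ i‖ ^ 2)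
        = (Real.sqrt (5 / (16 * Real.pi)))^2 * (Real.cos (2*θ)^2 + Real.cos θ^2) := by
      simp_rw [hY]
      rw [key_vsh, norm_neg, nexp2 _ (re_I_mul φ)]
    rw [show ((1:ℤ) - 1) = 0 from rfl, show ((1:ℤ) + 1) = 2 from rfl,
      hL, nY2s0 θ φ, nY2s1 θ φ, nY2s2 θ φ, Real.cos_two_mul]
    push_cast only [Int.cast_mul, Int.cast_add, Int.cast_sub, Int.cast_ofNat, Int.cast_one,
      Int.cast_pow, Int.cast_two, Int.cast_neg]
    linear_combination (-(5/(16*Real.pi))*(Real.sin θ^2+Real.cos θ^2+1)/2) * hsθ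
      + ((2*Real.cos θ^2-1)^2 + Real.cos θ^2 - (3*Real.cos θ^2-1)^2/2) * e1 - ((Real.sin θ*Real.cos θ)^2/6) * e2 - ((Real.sin θ^2)^2/3) * e3
  · -- p = 2
    have hY : ∀ i, Y2v 2 θ φ i
        = (Complex.exp (2 * Complex.I * (φ:ℂ)) * ((Real.sqrt (5 / (16 * Real.pi)) : ℝ) : ℂ)
            * ((Real.sin θ : ℝ):ℂ)) *
          (((Real.cos θ : ℝ):ℂ) * thetahat θ φ i + Complex.I * (((1 : ℝ)):ℂ) * phihat θ φ i) := by
      intro i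
      rw [Y2v, if_neg (by decide), if_neg (by decide), if_neg (by decide), if_pos rfl]
      beta_reduce
      try simp only [Complex.ofReal_neg, Complex.ofReal_one, Complex.ofReal_zero]
      try ring
    have hL : (∑ i, ‖Y2v 2 θ φ i‖ ^ 2)
        = (Real.sqrt (5 / (16 * Real.pi)))^2 * Real.sin θ^2 * (Real.cos θ^2 + (1:ℝ)^2) := by
      simp_rw [hY]
      rw [key_vsh, nexp3 _ (re_two_I_mul φ)]
    rw [show ((2:ℤ) - 1) = 1 from rfl, show ((2:ℤ) + 1) = 3 from rfl,
      hL, nY2s1 θ φ, nY2s2 θ φ, nY2s3 θ φ]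
    push_cast only [Int.cast_mul, Int.cast_add, Int.cast_sub, Int.cast_ofNat, Int.cast_one,
      Int.cast_pow, Int.cast_two, Int.cast_neg]
    linear_combination (-(5/(16*Real.pi))*Real.sin θ^2) * hsθ + (Real.sin θ^2*(Real.cos θ^2+1)) * e1
      - ((Real.sin θ*Real.cos θ)^2/3) * e2 - (2*(Real.sin θ^2)^2/3) * e3
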